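/- For every real x > 0, x·K₁(x) − K₀(x) ≤ √(π/2)·√x·exp(−x). -/

import Mathlib

set_option maxHeartbeats 1000000

open Real Set MeasureTheory Filter

/-- Modified Bessel function of the second kind of order 0:
`K₀(x) = ∫₀^∞ exp(−x cosh t) dt`. -/
noncomputable def besselK0 (x : ℝ) : ℝ :=
  ∫ t in Set.Ioi (0 : ℝ), Real.exp (-(x * Real.cosh t))

/-- Modified Bessel function of the second kind of order 1:
`K₁(x) = ∫₀^∞ exp(−x cosh t)·cosh t dt`. -/
noncomputable def besselK1 (x : ℝ) : ℝ :=
  ∫ t in Set.Ioi (0 : ℝ), Real.exp (-(x * Real.cosh t)) * Real.cosh t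

/-- If `f 0 ≥ 0` and `f' ≥ 0` on `[0,∞)` then `f t ≥ 0` for `t ≥ 0`. -/
lemma aux_nonneg {f f' : ℝ → ℝ} (hd : ∀ t, HasDerivAt f (f' t) t) (h0 : 0 ≤ f 0)
    (hf' : ∀ t, 0 ≤ t → 0 ≤ f' t) {t : ℝ} (ht : 0 ≤ t) : 0 ≤ f t := by
  have hmono : MonotoneOn f (Ici (0:ℝ)) := by
    apply monotoneOn_of_deriv_nonneg (convex_Ici 0)
      (fun s _ => (hd s).continuousAt.continuousWithinAt)
      (fun s hs => ((hd s).differentiableAt).differentiableWithinAt)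
    intro s hs
    rw [(hd s).deriv]
    exact hf' s (le_of_lt (by simpa using hs))
  exact le_trans h0 (hmono self_mem_Ici ht ht)

lemma aux_self_le_sinh {t : ℝ} (ht : 0 ≤ t) : t ≤ Real.sinh t := by
  rcases eq_or_lt_of_le ht with h | h
  · simp [← h]
  · exact (Real.self_lt_sinh_iff.2 h).le

lemma aux_cosh_ge {t : ℝ} (ht : 0 ≤ t) : 1 + t ^ 2 / 2 ≤ Real.cosh t := by
  have h : 0 ≤ Real.cosh t - 1 - t ^ 2 / 2 := aux_nonneg
    (f := fun s => Real.cosh s - 1 - s ^ 2 / 2) (f' := fun t => Real.sinh t - t)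
    (fun s => by
      have h : HasDerivAt (fun s => Real.cosh s - 1 - s ^ 2 / 2)
          (Real.sinh s - ((2:ℕ):ℝ) * s ^ (2 - 1) / 2) s :=
        ((Real.hasDerivAt_cosh s).sub_const 1).sub (((hasDerivAt_pow 2 s)).div_const 2)
      convert h using 1; norm_num)
    (by simp) (fun s hs => by simpa using aux_self_le_sinh hs) ht
  linarith

lemma aux_cosh_sub_le {t : ℝ} (ht : 0 ≤ t) : Real.cosh t - t * Real.sinh t ≤ 1 := by
  have h : 0 ≤ t * Real.sinh t - Real.cosh t + 1 := aux_nonneg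
    (f := fun s => s * Real.sinh s - Real.cosh s + 1) (f' := fun t => t * Real.cosh t)
    (fun s => by
      have h1 : HasDerivAt (fun t : ℝ => t * Real.sinh t)
          (1 * Real.sinh s + s * Real.cosh s) s :=
        (hasDerivAt_id' s).mul (Real.hasDerivAt_sinh s)
      have h2 : HasDerivAt (fun s => s * Real.sinh s - Real.cosh s + 1)
          (1 * Real.sinh s + s * Real.cosh s - Real.sinh s) s :=
        (h1.sub (Real.hasDerivAt_cosh s)).add_const 1
      convert h2 using 1; ring)
    (by simp) (fun s hs => mul_nonneg hs (Real.cosh_pos s).le) ht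
  linarith

/-- For every real `x > 0`, `x·K₁(x) − K₀(x) ≤ √(π/2)·√x·exp(−x)`. -/
theorem stmt_10 (x : ℝ) (hx : 0 < x) :
    x * besselK1 x - besselK0 x ≤
      Real.sqrt (Real.pi / 2) * Real.sqrt x * Real.exp (-x) := by
  set E : ℝ → ℝ := fun t => Real.exp (-(x * Real.cosh t)) with hE
  set g' : ℝ → ℝ := fun t => (x * t * Real.sinh t - 1) * E t with hg'def
  set g : ℝ → ℝ := fun t => -(t * E t) with hgdef
  have hEcont : Continuous E := by continuity
  have hEpos : ∀ t, 0 < E t := fun t => Real.exp_pos _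
  -- derivative
  have hderiv : ∀ t, HasDerivAt g (g' t) t := by
    intro t
    have h1 : HasDerivAt (fun t : ℝ => -(x * Real.cosh t)) (-(x * Real.sinh t)) t :=
      ((Real.hasDerivAt_cosh t).const_mul x).neg
    have h2 : HasDerivAt E (-(x * Real.sinh t) * E t) t := by
      simpa [hE, mul_comm] using h1.exp
    have h3 : HasDerivAt g (-(1 * E t + t * (-(x * Real.sinh t) * E t))) t :=
      ((hasDerivAt_id' (x := t)).mul h2).neg
    convert h3 using 1
    show (x * t * Real.sinh t - 1) * E t = _
    ring
  -- tendsto at top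
  have htend : Tendsto g atTop (nhds 0) := by
    have hb : Tendsto (fun t : ℝ => (1 / x) * ((x * t) ^ 1 * Real.exp (-(x * t))))
        atTop (nhds 0) := by
      have := (tendsto_pow_mul_exp_neg_atTop_nhds_zero 1).comp
        (Tendsto.const_mul_atTop hx tendsto_id)
      simpa using this.const_mul (1 / x)
    apply squeeze_zero_norm' _ hb
    filter_upwards [eventually_ge_atTop (0:ℝ)] with t ht
    have hct : t ≤ Real.cosh t :=
      le_trans (aux_self_le_sinh ht) (le_of_lt (Real.sinh_lt_cosh t))
    have hEle : E t ≤ Real.exp (-(x * t)) :=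
      Real.exp_le_exp.2 (by nlinarith)
    have h0 : 0 ≤ t * E t := mul_nonneg ht (hEpos t).le
    calc ‖g t‖ = t * E t := by
          rw [show g t = -(t * E t) from rfl, norm_neg, Real.norm_eq_abs, abs_of_nonneg h0]
      _ ≤ t * Real.exp (-(x * t)) := by nlinarith
      _ = (1 / x) * ((x * t) ^ 1 * Real.exp (-(x * t))) := by
          rw [pow_one]; field_simp
  -- the threshold
  set a : ℝ := 1 + 2 / x with hadef
  have ha1 : (1:ℝ) ≤ a := by
    have : 0 < 2 / x := by positivity
    rw [hadef]; linarith
  have ha0 : (0:ℝ) < a := lt_of_lt_of_le one_pos ha1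
  have hkey : ∀ t, a ≤ t → 2 ≤ x * t * Real.sinh t := by
    intro t hta
    have ht1 : (1:ℝ) ≤ t := le_trans ha1 hta
    have ht0 : (0:ℝ) ≤ t := le_trans zero_le_one ht1
    have hs : t ≤ Real.sinh t := aux_self_le_sinh ht0
    have h1 : a * a ≤ t * t := mul_le_mul hta hta ha0.le ht0
    have h2 : t * t ≤ t * Real.sinh t := mul_le_mul_of_nonneg_left hs ht0
    have h3 : x * (a * a) ≤ x * (t * Real.sinh t) :=
      mul_le_mul_of_nonneg_left (h1.trans h2) hx.le
    have h4 : x * (a * a) = x + 4 + 4 / x := by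
      rw [hadef]; field_simp; ring
    have h5 : 0 < 4 / x := by positivity
    calc (2:ℝ) ≤ x + 4 + 4 / x := by linarith
      _ = x * (a * a) := h4.symm
      _ ≤ x * (t * Real.sinh t) := h3
      _ = x * t * Real.sinh t := by ring
  -- integrability of g' on Ioi a
  have hg'int : IntegrableOn g' (Ioi a) := by
    apply integrableOn_Ioi_deriv_of_nonneg' (fun t _ => hderiv t) _ htend
    intro t ht
    have hk := hkey t (le_of_lt ht)
    have hep := (hEpos t).le
    show (0:ℝ) ≤ (x * t * Real.sinh t - 1) * E t
    nlinarith
  -- integrability of E on Ioi a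
  have hEintA : IntegrableOn E (Ioi a) := by
    apply hg'int.mono' (hEcont.aestronglyMeasurable)
    filter_upwards [ae_restrict_mem measurableSet_Ioi] with t ht
    have hk := hkey t (le_of_lt ht)
    have hep := hEpos t
    rw [Real.norm_eq_abs, abs_of_nonneg hep.le]
    show E t ≤ (x * t * Real.sinh t - 1) * E t
    nlinarith
  -- integrability of E * cosh on Ioi a
  have hEcintA : IntegrableOn (fun t => E t * Real.cosh t) (Ioi a) := by
    apply ((hg'int.const_mul (4 / x)).mono'
      (Continuous.aestronglyMeasurable (by continuity)))
    filter_upwards [ae_restrict_mem measurableSet_Ioi] with t ht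
    have ht1 : (1:ℝ) ≤ t := le_trans ha1 (le_of_lt ht)
    have ht0 : (0:ℝ) ≤ t := le_trans zero_le_one ht1
    have hk := hkey t (le_of_lt ht)
    have hep := hEpos t
    have hs : t ≤ Real.sinh t := aux_self_le_sinh ht0
    have hsc : Real.cosh t - Real.sinh t ≤ 1 := by
      rw [Real.cosh_sub_sinh]
      exact Real.exp_le_one_iff.2 (by linarith)
    have hcosh : Real.cosh t ≤ 2 * (t * Real.sinh t) := by nlinarith
    have hEc : 0 ≤ E t * Real.cosh t := mul_nonneg hep.le (Real.cosh_pos t).le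
    rw [Real.norm_eq_abs, abs_of_nonneg hEc]
    show E t * Real.cosh t ≤ 4 / x * ((x * t * Real.sinh t - 1) * E t)
    rw [div_mul_eq_mul_div, le_div_iff₀ hx]
    have h1 : x * E t * Real.cosh t ≤ x * E t * (2 * (t * Real.sinh t)) :=
      mul_le_mul_of_nonneg_left hcosh (mul_nonneg hx.le hep.le)
    have h2 : x * t * Real.sinh t ≤ 2 * (x * t * Real.sinh t - 1) := by linarith
    have h3 : (x * t * Real.sinh t) * E t ≤ (2 * (x * t * Real.sinh t - 1)) * E t :=
      mul_le_mul_of_nonneg_right h2 hep.le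
    nlinarith [h1, h3]
  -- integrability on Ioc 0 a, then on Ioi 0
  have hunion : Ioc (0:ℝ) a ∪ Ioi a = Ioi 0 := Ioc_union_Ioi_eq_Ioi ha0.le
  have glue : ∀ {f : ℝ → ℝ}, Continuous f → IntegrableOn f (Ioi a) →
      IntegrableOn f (Ioi (0:ℝ)) := by
    intro f hf hfa
    rw [← hunion]
    exact (hf.integrableOn_Ioc).union hfa
  have hEint : IntegrableOn E (Ioi (0:ℝ)) := glue hEcont hEintA
  have hEcint : IntegrableOn (fun t => E t * Real.cosh t) (Ioi (0:ℝ)) :=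
    glue (by continuity) hEcintA
  have hg'int0 : IntegrableOn g' (Ioi (0:ℝ)) := glue (by continuity) hg'int
  -- FTC : integral of g' over Ioi 0 is 0
  have hFTC : ∫ t in Ioi (0:ℝ), g' t = 0 := by
    have := integral_Ioi_of_hasDerivAt_of_tendsto' (f := g) (f' := g')
      (fun t _ => hderiv t) hg'int0 htend
    simpa [hgdef] using this
  -- rewrite LHS as a single integral
  have e1 : x * besselK1 x = ∫ t in Ioi (0:ℝ), x * (E t * Real.cosh t) := by
    rw [besselK1, MeasureTheory.integral_const_mul]
  have e2 : x * besselK1 x - besselK0 x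
      = ∫ t in Ioi (0:ℝ), (x * (E t * Real.cosh t) - E t) := by
    rw [e1, besselK0, ← integral_sub (hEcint.const_mul x) hEint]
  have hLHS : x * besselK1 x - besselK0 x
      = ∫ t in Ioi (0:ℝ), (x * (Real.cosh t - t * Real.sinh t)) * E t := by
    calc x * besselK1 x - besselK0 x
        = ∫ t in Ioi (0:ℝ), (x * (E t * Real.cosh t) - E t) := e2
      _ = (∫ t in Ioi (0:ℝ), (x * (E t * Real.cosh t) - E t)) - 0 := (sub_zero _).symm
      _ = (∫ t in Ioi (0:ℝ), (x * (E t * Real.cosh t) - E t))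
            - ∫ t in Ioi (0:ℝ), g' t := by rw [hFTC]
      _ = ∫ t in Ioi (0:ℝ), ((x * (E t * Real.cosh t) - E t) - g' t) :=
          (integral_sub ((hEcint.const_mul x).sub hEint) hg'int0).symm
      _ = ∫ t in Ioi (0:ℝ), (x * (Real.cosh t - t * Real.sinh t)) * E t := by
          apply setIntegral_congr_fun measurableSet_Ioi
          intro t _
          show x * (E t * Real.cosh t) - E t - (x * t * Real.sinh t - 1) * E t = _
          ring
  rw [hLHS]
  -- bound by a Gaussian integral
  have hGint : IntegrableOn (fun t => x * Real.exp (-x) * Real.exp (-(x/2) * t ^ 2))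
      (Ioi (0:ℝ)) :=
    (((integrable_exp_neg_mul_sq (by positivity : (0:ℝ) < x/2)).const_mul
      (x * Real.exp (-x)))).integrableOn
  have hDint : IntegrableOn (fun t => (x * (Real.cosh t - t * Real.sinh t)) * E t)
      (Ioi (0:ℝ)) := by
    apply (((hEcint.const_mul x).sub hEint).sub hg'int0).congr
    apply ae_of_all
    intro t
    show x * (E t * Real.cosh t) - E t - (x * t * Real.sinh t - 1) * E t = _
    ring
  have hmain : (∫ t in Ioi (0:ℝ), (x * (Real.cosh t - t * Real.sinh t)) * E t)
      ≤ ∫ t in Ioi (0:ℝ), x * Real.exp (-x) * Real.exp (-(x/2) * t ^ 2) := by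
    apply setIntegral_mono_on hDint hGint measurableSet_Ioi
    intro t ht
    have ht0 : (0:ℝ) ≤ t := (le_of_lt ht)
    have h1 : Real.cosh t - t * Real.sinh t ≤ 1 := aux_cosh_sub_le ht0
    have h2 : E t ≤ Real.exp (-x) * Real.exp (-(x/2) * t ^ 2) := by
      rw [← Real.exp_add]
      apply Real.exp_le_exp.2
      have := aux_cosh_ge ht0
      nlinarith
    have hep := (hEpos t).le
    have h1' := mul_le_mul_of_nonneg_left (mul_le_mul_of_nonneg_right h1 hep) hx.le
    calc (x * (Real.cosh t - t * Real.sinh t)) * E t ≤ x * 1 * E t := by nlinarith [h1']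
      _ = x * E t := by ring
      _ ≤ x * (Real.exp (-x) * Real.exp (-(x/2) * t ^ 2)) := by nlinarith
      _ = x * Real.exp (-x) * Real.exp (-(x/2) * t ^ 2) := by ring
  refine le_trans hmain ?_
  -- evaluate the Gaussian integral
  rw [MeasureTheory.integral_const_mul, integral_gaussian_Ioi]
  have hval : x * (Real.sqrt (Real.pi / (x/2)) / 2) = Real.sqrt (Real.pi / 2) * Real.sqrt x := by
    have h4 : Real.sqrt 4 = 2 := by
      rw [show (4:ℝ) = 2 ^ 2 by norm_num, Real.sqrt_sq (by norm_num)]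
    calc x * (Real.sqrt (Real.pi / (x/2)) / 2)
        = Real.sqrt (x ^ 2) * Real.sqrt (Real.pi / (x/2)) / 2 := by
          rw [Real.sqrt_sq hx.le]; ring
      _ = Real.sqrt (x ^ 2 * (Real.pi / (x/2))) / 2 := by rw [Real.sqrt_mul (by positivity)]
      _ = Real.sqrt (4 * (Real.pi / 2 * x)) / 2 := by
          rw [show x ^ 2 * (Real.pi / (x/2)) = 4 * (Real.pi / 2 * x) by field_simp; ring]
      _ = Real.sqrt 4 * Real.sqrt (Real.pi / 2 * x) / 2 := by
          rw [Real.sqrt_mul (by norm_num)]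
      _ = Real.sqrt (Real.pi / 2) * Real.sqrt x := by
          rw [h4, Real.sqrt_mul (by positivity)]; ring
  have hfin : x * Real.exp (-x) * (Real.sqrt (Real.pi / (x/2)) / 2)
      = Real.sqrt (Real.pi / 2) * Real.sqrt x * Real.exp (-x) := by rw [← hval]; ring
  exact le_of_eq hfin
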